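/- For any upset α ⊆ [0,1] (a set containing 1, excluding 0, and upward closed), an argument ⟨Γ, Δ⟩ of finite sets of propositional formulas is α-materially valid (i.e., every probabilistic model assigns a probability in α to ⋀Γ ⊃ ⋁Δ) if and only if ⟨Γ, Δ⟩ is classically valid. -/

import Mathlib

/-- Propositional formulas: atoms, negation, disjunction. -/
inductive Fml : Type
  | atom : ℕ → Fml
  | neg : Fml → Fml
  | or : Fml → Fml → Fml
deriving DecidableEq

namespace Fml

def and (φ ψ : Fml) : Fml := neg (or (neg φ) (neg ψ))

def bot : Fml := and (atom 0) (neg (atom 0))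

def imp (φ ψ : Fml) : Fml := or (neg φ) ψ

def eval (v : ℕ → Bool) : Fml → Bool
  | atom n => v n
  | neg φ => !(eval v φ)
  | or φ ψ => (eval v φ) || (eval v ψ)

end Fml

/-- Two formulas are jointly classically unsatisfiable. -/
def Incompatible (φ ψ : Fml) : Prop :=
  ∀ v : ℕ → Bool, ¬(φ.eval v = true ∧ ψ.eval v = true)

/-- Classical (Set-Set) validity. -/
def ClValid (Γ Δ : Finset Fml) : Prop :=
  ∀ v : ℕ → Bool, (∀ γ ∈ Γ, γ.eval v = true) → ∃ δ ∈ Δ, δ.eval v = true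

/-- Classical single-conclusion entailment. -/
def ClEntails (Γ : Finset Fml) (φ : Fml) : Prop :=
  ∀ v : ℕ → Bool, (∀ γ ∈ Γ, γ.eval v = true) → φ.eval v = true

def ClConsistent (Γ : Finset Fml) : Prop :=
  ∃ v : ℕ → Bool, ∀ γ ∈ Γ, γ.eval v = true

def Tautology (φ : Fml) : Prop := ∀ v : ℕ → Bool, φ.eval v = true

/-- A probability distribution on formulas. -/
structure ProbDist where
  p : Fml → ℝ
  nonneg : ∀ φ, 0 ≤ p φ
  le_one : ∀ φ, p φ ≤ 1
  bot_eq : p Fml.bot = 0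
  neg_eq : ∀ φ, p (Fml.neg φ) = 1 - p φ
  add_eq : ∀ φ ψ, Incompatible φ ψ → p (Fml.or φ ψ) = p φ + p ψ

/-- A probabilistic model: worlds with classical valuations and a finitely
additive probability measure on subsets of worlds. -/
structure PModel where
  W : Type
  nonempty : Nonempty W
  val : W → ℕ → Bool
  μ : Set W → ℝ
  nonneg : ∀ A : Set W, 0 ≤ μ A
  empty_eq : μ (∅ : Set W) = 0
  univ_eq : μ (Set.univ : Set W) = 1
  add_eq : ∀ A B : Set W, Disjoint A B → μ (A ∪ B) = μ A + μ B

/-- Denotation of a formula in a model. -/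
def PModel.den (M : PModel) (φ : Fml) : Set M.W := {w | φ.eval (M.val w) = true}

/-- Induced probability of a formula in a model. -/
def PModel.prob (M : PModel) (φ : Fml) : ℝ := M.μ (M.den φ)

/-- An upset of [0,1]: contains 1, excludes 0, upward closed within [0,1]. -/
def IsUpset (α : Set ℝ) : Prop :=
  α ⊆ Set.Icc 0 1 ∧ (1 : ℝ) ∈ α ∧ (0 : ℝ) ∉ α ∧
    ∀ x ∈ α, ∀ y ∈ Set.Icc (0:ℝ) 1, x ≤ y → y ∈ α

/-- The mirror image of α. -/
def mirror (α : Set ℝ) : Set ℝ := {x ∈ Set.Icc (0:ℝ) 1 | 1 - x ∈ α}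

/-- The dual of α. -/
def dual (α : Set ℝ) : Set ℝ := Set.Icc (0:ℝ) 1 \ mirror α

/-- Conjunction of a finite set of formulas. -/
noncomputable def conj (Γ : Finset Fml) : Fml := Γ.toList.foldr Fml.and (Fml.neg Fml.bot)

/-- Disjunction of a finite set of formulas. -/
noncomputable def disj (Δ : Finset Fml) : Fml := Δ.toList.foldr Fml.or Fml.bot

/-- Disjunction of a list of formulas. -/
def disjList (l : List Fml) : Fml := l.foldr Fml.or Fml.bot

/-- α-preservation validity (over probability distributions). -/
def PresValid (α : Set ℝ) (Γ Δ : Finset Fml) : Prop :=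
  ∀ P : ProbDist, (∀ γ ∈ Γ, P.p γ ∈ α) → ∃ δ ∈ Δ, P.p δ ∈ α

/-- α-preservation validity (over probabilistic models). -/
def PresValidM (α : Set ℝ) (Γ Δ : Finset Fml) : Prop :=
  ∀ M : PModel, (∀ γ ∈ Γ, M.prob γ ∈ α) → ∃ δ ∈ Δ, M.prob δ ∈ α

/-- α-symmetric validity. -/
def SymValid (α : Set ℝ) (Γ Δ : Finset Fml) : Prop :=
  ∀ P : ProbDist, (∀ γ ∈ Γ, P.p γ ∈ α) → ∃ δ ∈ Δ, P.p δ ∉ mirror α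

/-- α-satisfiability of a finite set of formulas. -/
def Satis (α : Set ℝ) (Γ : Finset Fml) : Prop :=
  ∃ P : ProbDist, ∀ γ ∈ Γ, P.p γ ∈ α

lemma eval_and (v : ℕ → Bool) (φ ψ : Fml) :
    (Fml.and φ ψ).eval v = (φ.eval v && ψ.eval v) := by
  simp [Fml.and, Fml.eval]

lemma eval_bot (v : ℕ → Bool) : Fml.bot.eval v = false := by
  simp [Fml.bot, eval_and, Fml.eval]

lemma eval_foldr_and (v : ℕ → Bool) (l : List Fml) :
    (l.foldr Fml.and (Fml.neg Fml.bot)).eval v = true ↔ ∀ φ ∈ l, φ.eval v = true := by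
  induction l with
  | nil => simp [Fml.eval, eval_bot]
  | cons a t ih => simp [eval_and, ih]

lemma eval_foldr_or (v : ℕ → Bool) (l : List Fml) :
    (l.foldr Fml.or Fml.bot).eval v = true ↔ ∃ φ ∈ l, φ.eval v = true := by
  induction l with
  | nil => simp [eval_bot]
  | cons a t ih => simp [Fml.eval, ih]

lemma eval_imp_conj_disj (v : ℕ → Bool) (Γ Δ : Finset Fml) :
    (Fml.imp (conj Γ) (disj Δ)).eval v = true ↔
      ((∀ γ ∈ Γ, γ.eval v = true) → ∃ δ ∈ Δ, δ.eval v = true) := by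
  simp only [Fml.imp, Fml.eval, Bool.or_eq_true, Bool.not_eq_true', conj, disj,
    eval_foldr_or, Finset.mem_toList]
  constructor
  · rintro (h | ⟨δ, hδ, he⟩) hΓ
    · exact absurd ((eval_foldr_and v Γ.toList).mpr (by simpa using hΓ)) (by simp [h])
    · exact ⟨δ, hδ, he⟩
  · intro h
    by_cases hc : (Γ.toList.foldr Fml.and (Fml.neg Fml.bot)).eval v = true
    · rcases h (fun γ hγ => (eval_foldr_and v _).mp hc γ (by simpa using hγ)) with ⟨δ, hδ, he⟩
      exact Or.inr ⟨δ, hδ, he⟩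
    · exact Or.inl (by simpa using hc)

open Classical in
/-- One-world model from a valuation. -/
noncomputable def oneWorld (v : ℕ → Bool) : PModel where
  W := Unit
  nonempty := ⟨()⟩
  val := fun _ => v
  μ := fun A => if () ∈ A then 1 else 0
  nonneg := fun A => by split <;> norm_num
  empty_eq := by simp
  univ_eq := by simp
  add_eq := fun A B hd => by
    by_cases hA : () ∈ A
    · have hB : () ∉ B := fun hB => (Set.disjoint_left.mp hd hA) hB
      simp [hA, hB]
    · by_cases hB : () ∈ B <;> simp [hA, hB]

/-- α-material validity coincides with classical validity. -/
theorem stmt1 (α : Set ℝ) (hα : IsUpset α) (Γ Δ : Finset Fml) :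
    (∀ M : PModel, M.prob (Fml.imp (conj Γ) (disj Δ)) ∈ α) ↔ ClValid Γ Δ := by
  obtain ⟨hsub, h1, h0, hup⟩ := hα
  constructor
  · intro h v hΓ
    by_contra hd
    push_neg at hd
    have : ¬(Fml.imp (conj Γ) (disj Δ)).eval v = true := by
      rw [eval_imp_conj_disj]
      intro hcon
      rcases hcon hΓ with ⟨δ, hδ, he⟩
      exact absurd he (by simp [hd δ hδ])
    have hden : (oneWorld v).den (Fml.imp (conj Γ) (disj Δ)) = ∅ := by
      ext w
      simp only [PModel.den, Set.mem_setOf_eq, Set.mem_empty_iff_false, iff_false]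
      exact this
    have := h (oneWorld v)
    rw [PModel.prob, hden] at this
    simp [oneWorld] at this
    exact h0 (by convert this using 1; exact (if_neg (fun hh => hh)).symm)
  · intro hcl M
    have hden : M.den (Fml.imp (conj Γ) (disj Δ)) = Set.univ := by
      ext w
      simp only [PModel.den, Set.mem_setOf_eq, Set.mem_univ, iff_true]
      rw [eval_imp_conj_disj]
      exact hcl (M.val w)
    rw [PModel.prob, hden, M.univ_eq]
    exact h1
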